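/- Let K be a field, let A : ℤ → K satisfy A h ≠ 0 for all h, and suppose there are λ, μ ∈ K such that A(h−2)·A(h+2) = λ·A(h−1)·A(h+1) + μ·A(h)² for all h ∈ ℤ (i.e., A is a Somos 4 sequence). Then for every integer m ≥ 2 there exist constants a, b ∈ K such that A(h−m)·A(h+m) = a·A(h−1)·A(h+1) + b·A(h)² for all h ∈ ℤ; that is, A is a three-term Somos 2m sequence for every m ≥ 2. -/

import Mathlib

theorem somos4_is_somos_even {K : Type*} [Field K] (A : ℤ → K)
    (hA : ∀ h : ℤ, A h ≠ 0) (lam mu : K)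
    (hrec : ∀ h : ℤ, A (h - 2) * A (h + 2) = lam * (A (h - 1) * A (h + 1)) + mu * (A h) ^ 2) :
    ∀ m : ℤ, 2 ≤ m → ∃ a b : K,
      ∀ h : ℤ, A (h - m) * A (h + m) = a * (A (h - 1) * A (h + 1)) + b * (A h) ^ 2 := by
  -- generic constancy lemma for a "ratio" W/uv that is invariant under shift
  have generic : ∀ (Wf uv : ℤ → K), (∀ h, uv h ≠ 0) →
      (∀ h, Wf h * uv (h + 1) = Wf (h + 1) * uv h) →
      ∀ h, Wf h * uv 0 = Wf 0 * uv h := by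
    intro Wf uv hnz hstep h
    induction h using Int.induction_on with
    | zero => rfl
    | succ i ih =>
      apply mul_right_cancel₀ (hnz (i : ℤ))
      linear_combination uv ((i : ℤ) + 1) * ih - uv 0 * hstep (i : ℤ)
    | pred i ih =>
      have hs := hstep (-(i : ℤ) - 1)
      rw [show -(i : ℤ) - 1 + 1 = -(i : ℤ) by ring] at hs
      apply mul_right_cancel₀ (hnz (-(i : ℤ)))
      linear_combination uv 0 * hs + uv (-(i : ℤ) - 1) * ih
  have hnz : ∀ h : ℤ, (A (h - 1) * A (h + 1)) * A h ^ 2 ≠ 0 := fun h =>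
    mul_ne_zero (mul_ne_zero (hA _) (hA _)) (pow_ne_zero _ (hA _))
  -- the shift-step identity for the invariant numerator
  have hstep' : ∀ h : ℤ,
      (A (h - 2) * A h * A (h + 1) ^ 2 + A (h - 1) ^ 2 * (A h * A (h + 2)) + lam * (A h ^ 2) ^ 2) *
          ((A (h + 1 - 1) * A (h + 1 + 1)) * A (h + 1) ^ 2) =
      (A (h + 1 - 2) * A (h + 1) * A (h + 1 + 1) ^ 2 +
          A (h + 1 - 1) ^ 2 * (A (h + 1) * A (h + 1 + 2)) + lam * (A (h + 1) ^ 2) ^ 2) *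
          ((A (h - 1) * A (h + 1)) * A h ^ 2) := by
    intro h
    have e1 := hrec h
    have e2 := hrec (h + 1)
    rw [show h + 1 - 2 = h - 1 by ring, show h + 1 - 1 = h by ring,
      show h + 1 + 1 = h + 2 by ring, show h + 1 + 2 = h + 3 by ring] at e2 ⊢
    linear_combination (A h) ^ 2 * (A (h + 1)) ^ 4 * e1 - (A h) ^ 4 * (A (h + 1)) ^ 2 * e2
  have main : ∀ h : ℤ,
      (A (h - 2) * A h * A (h + 1) ^ 2 + A (h - 1) ^ 2 * (A h * A (h + 2)) + lam * (A h ^ 2) ^ 2) *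
        ((A (0 - 1) * A (0 + 1)) * A 0 ^ 2) =
      (A (0 - 2) * A 0 * A (0 + 1) ^ 2 + A (0 - 1) ^ 2 * (A 0 * A (0 + 2)) + lam * (A 0 ^ 2) ^ 2) *
        ((A (h - 1) * A (h + 1)) * A h ^ 2) :=
    generic
      (fun h => A (h - 2) * A h * A (h + 1) ^ 2 + A (h - 1) ^ 2 * (A h * A (h + 2)) +
        lam * (A h ^ 2) ^ 2)
      (fun h => (A (h - 1) * A (h + 1)) * A h ^ 2) hnz hstep'
  -- the invariant J
  obtain ⟨J, hW⟩ : ∃ J : K, ∀ h : ℤ,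
      A (h - 2) * A h * A (h + 1) ^ 2 + A (h - 1) ^ 2 * (A h * A (h + 2)) + lam * (A h ^ 2) ^ 2 =
        J * ((A (h - 1) * A (h + 1)) * A h ^ 2) := by
    refine ⟨(A (0 - 2) * A 0 * A (0 + 1) ^ 2 + A (0 - 1) ^ 2 * (A 0 * A (0 + 2)) +
      lam * (A 0 ^ 2) ^ 2) / ((A (0 - 1) * A (0 + 1)) * A 0 ^ 2), fun h => ?_⟩
    rw [div_mul_eq_mul_div, eq_div_iff (hnz 0)]
    linear_combination main h
  -- strengthened induction
  have strong : ∀ m : ℤ, 2 ≤ m → ∃ a b ap bp : K,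
      (∀ h : ℤ, A (h - m) * A (h + m) = a * (A (h - 1) * A (h + 1)) + b * A h ^ 2) ∧
      (∀ h : ℤ, A (h - (m - 1)) * A (h + (m - 1)) = ap * (A (h - 1) * A (h + 1)) + bp * A h ^ 2) ∧
      (b ^ 2 * bp ^ 2 - (lam * a ^ 2 + J * a * b) * (ap * bp) +
        (mu * a ^ 2 - lam * a * b) * ap ^ 2 = 0) := by
    refine Int.le_induction ?_ ?_
    ·
      refine ⟨lam, mu, 1, 0, fun h => hrec h, fun h => ?_, by ring⟩
      rw [show (2 : ℤ) - 1 = 1 by norm_num]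
      ring
    · intro m hm ih
      obtain ⟨a, b, ap, bp, h1, h2, hF⟩ := ih
      have hapbp : ¬(ap = 0 ∧ bp = 0) := by
        rintro ⟨e1, e2⟩
        have h0 := h2 0
        rw [e1, e2] at h0
        simp only [zero_mul, add_zero] at h0
        exact mul_ne_zero (hA _) (hA _) h0
      have hstep2 : ∃ app bpp : K, app * ap = b ^ 2 ∧
          app * bp + ap * bpp = lam * a ^ 2 + J * a * b ∧
          bpp * bp = mu * a ^ 2 - lam * a * b ∧
          (bpp ^ 2 * b ^ 2 - (lam * app ^ 2 + J * app * bpp) * (a * b) +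
            (mu * app ^ 2 - lam * app * bpp) * a ^ 2 = 0) := by
        by_cases hap : ap = 0
        · have hbp : bp ≠ 0 := fun hbp => hapbp ⟨hap, hbp⟩
          have hb : b = 0 := by
            have h9 : b ^ 2 * bp ^ 2 = 0 := by
              rw [hap] at hF
              linear_combination hF
            by_contra hb
            exact (mul_ne_zero (pow_ne_zero 2 hb) (pow_ne_zero 2 hbp)) h9
          refine ⟨lam * a ^ 2 / bp, mu * a ^ 2 / bp, ?_, ?_, ?_, ?_⟩
          · rw [hap, hb]; ring
          · rw [hap, hb, div_mul_cancel₀ _ hbp]; ring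
          · rw [hb, div_mul_cancel₀ _ hbp]; ring
          · rw [hb]; field_simp; ring
        · set app : K := b ^ 2 / ap with happ
          set bpp : K := (lam * a ^ 2 + J * a * b - b ^ 2 / ap * bp) / ap with hbpp
          have hR1 : app * ap = b ^ 2 := by
            rw [happ]; exact div_mul_cancel₀ _ hap
          have hbppap : bpp * ap = lam * a ^ 2 + J * a * b - app * bp := by
            rw [hbpp, happ]; exact div_mul_cancel₀ _ hap
          have hR2 : app * bp + ap * bpp = lam * a ^ 2 + J * a * b := by
            linear_combination hbppap
          have hR3 : bpp * bp = mu * a ^ 2 - lam * a * b := by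
            have h9 : (bpp * bp - (mu * a ^ 2 - lam * a * b)) * ap ^ 2 = 0 := by
              linear_combination (bp * ap) * hbppap - bp ^ 2 * hR1 - hF
            have h10 := (mul_eq_zero.mp h9).resolve_right (pow_ne_zero 2 hap)
            linear_combination h10
          have hR4 : bpp ^ 2 * b ^ 2 - (lam * app ^ 2 + J * app * bpp) * (a * b) +
              (mu * app ^ 2 - lam * app * bpp) * a ^ 2 = 0 := by
            have h9 : (bpp ^ 2 * b ^ 2 - (lam * app ^ 2 + J * app * bpp) * (a * b) +
                (mu * app ^ 2 - lam * app * bpp) * a ^ 2) * ap ^ 2 = 0 := by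
              linear_combination
                ((mu * a ^ 2 - lam * a * b) * (app * ap + b ^ 2) -
                  (lam * a ^ 2 + J * a * b) * (bpp * ap) - b ^ 2 * (bpp * bp)) * hR1 +
                (b ^ 2 * (bpp * ap)) * hR2 + (-(b ^ 4)) * hR3
            exact (mul_eq_zero.mp h9).resolve_right (pow_ne_zero 2 hap)
          exact ⟨app, bpp, hR1, hR2, hR3, hR4⟩
      obtain ⟨app, bpp, hR1, hR2, hR3, hR4⟩ := hstep2
      refine ⟨app, bpp, a, b, ?_, ?_, ?_⟩
      · intro h
        have hm1 := h1 (h - 1)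
        have hp1 := h1 (h + 1)
        rw [show h - 1 - m = h - (m + 1) by ring, show h - 1 + m = h + (m - 1) by ring,
          show h - 1 - 1 = h - 2 by ring, show h - 1 + 1 = h by ring] at hm1
        rw [show h + 1 - m = h - (m - 1) by ring, show h + 1 + m = h + (m + 1) by ring,
          show h + 1 - 1 = h by ring, show h + 1 + 1 = h + 2 by ring] at hp1
        apply mul_right_cancel₀ (mul_ne_zero (hA (h - (m - 1))) (hA (h + (m - 1))))
        calc A (h - (m + 1)) * A (h + (m + 1)) * (A (h - (m - 1)) * A (h + (m - 1)))
            = (A (h - (m + 1)) * A (h + (m - 1))) * (A (h - (m - 1)) * A (h + (m + 1))) := by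
              ring
          _ = (a * (A (h - 2) * A h) + b * A (h - 1) ^ 2) *
              (a * (A h * A (h + 2)) + b * A (h + 1) ^ 2) := by rw [hm1, hp1]
          _ = (app * (A (h - 1) * A (h + 1)) + bpp * A h ^ 2) *
              (ap * (A (h - 1) * A (h + 1)) + bp * A h ^ 2) := by
              linear_combination (a ^ 2 * A h ^ 2) * hrec h + (a * b) * hW h -
                (A (h - 1) * A (h + 1)) ^ 2 * hR1 -
                ((A (h - 1) * A (h + 1)) * A h ^ 2) * hR2 - (A h ^ 2 * A h ^ 2) * hR3
          _ = (app * (A (h - 1) * A (h + 1)) + bpp * A h ^ 2) *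
              (A (h - (m - 1)) * A (h + (m - 1))) := by rw [h2 h]
      · intro h
        rw [show m + 1 - 1 = m by ring]
        exact h1 h
      · exact hR4
  intro m hm
  obtain ⟨a, b, ap, bp, hh, -, -⟩ := strong m hm
  exact ⟨a, b, hh⟩
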